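/- (Direction bias, Result 4, case β > 0.) Suppose α > 0, ω > 0, β > 0 and e^γ > max{e^{2β}, e^β + (α/ω)(e^β − 1)}. Then there exists t* > 0 such that for all T > t*, F₁(T) < F₂(T); that is, the risk ratio is below 1 even though β > 0, so the risk ratio is not direction-unbiased. -/

import Mathlib

open Real

/-- Infection probability at time `t` of subject 1 (covariate `x = 1`) in the
two-person-cluster susceptible–infective model. -/
noncomputable def F₁ (α ω β : ℝ) (t : ℝ) : ℝ :=
  α * ∫ s in (0:ℝ)..t,
    (exp β + 1 - exp (-(exp β * (α + ω)) * (t - s))) * exp (-(α * (exp β + 1)) * s)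

/-- Infection probability at time `t` of subject 2 (covariate `x = 0`) in the
two-person-cluster susceptible–infective model. -/
noncomputable def F₂ (α ω β γ : ℝ) (t : ℝ) : ℝ :=
  α * ∫ s in (0:ℝ)..t,
    (exp β + 1 - exp β * exp (-(α + ω * exp γ) * (t - s))) * exp (-(α * (exp β + 1)) * s)

/-- `Eint k T = ∫ s in 0..T, exp (k*s)` in closed form. -/
noncomputable def Eint (k T : ℝ) : ℝ := if k = 0 then T else (exp (k*T) - 1)/k

lemma integral_exp_mul' (k T : ℝ) : ∫ s in (0:ℝ)..T, exp (k*s) = Eint k T := by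
  unfold Eint
  split_ifs with hk
  · simp [hk]
  · have hd : ∀ s ∈ Set.uIcc (0:ℝ) T, HasDerivAt (fun x => exp (k*x)/k) (exp (k*s)) s := by
      intro s _
      have h1 : HasDerivAt (fun x : ℝ => k*x) k s := by
        simpa using (hasDerivAt_id s).const_mul k
      have h2 := (Real.hasDerivAt_exp (k*s)).comp s h1
      have h3 := h2.div_const k
      simpa [mul_div_assoc, mul_div_cancel_right₀ _ hk] using h3
    rw [intervalIntegral.integral_eq_sub_of_hasDerivAt hd
      (Continuous.intervalIntegrable (by fun_prop) _ _)]
    simp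
    ring

lemma Eint_symm (k T : ℝ) : exp (-(k*T)) * Eint k T = Eint (-k) T := by
  unfold Eint
  rcases eq_or_ne k 0 with hk | hk
  · simp [hk]
  · rw [if_neg hk, if_neg (neg_ne_zero.mpr hk)]
    have h : exp (-(k*T)) * (exp (k*T) - 1) = 1 - exp (-(k*T)) := by
      rw [mul_sub, ← exp_add]; simp
    rw [← mul_div_assoc, h, div_neg, ← neg_div, neg_sub, neg_mul]

lemma Eint_mono {k₁ k₂ : ℝ} (h : k₁ ≤ k₂) {T : ℝ} (hT : 0 ≤ T) : Eint k₁ T ≤ Eint k₂ T := by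
  rw [← integral_exp_mul', ← integral_exp_mul']
  apply intervalIntegral.integral_mono_on hT
    (Continuous.intervalIntegrable (by fun_prop) _ _)
    (Continuous.intervalIntegrable (by fun_prop) _ _)
  intro s hs
  exact exp_le_exp.mpr (mul_le_mul_of_nonneg_right h hs.1)

lemma Eint_lt_of_neg {q : ℝ} (hq : q < 0) (T : ℝ) : Eint q T < -(1/q) := by
  unfold Eint
  rw [if_neg hq.ne, div_lt_iff_of_neg hq]
  have h := exp_pos (q*T)
  have hq' : q ≠ 0 := hq.ne
  field_simp
  linarith

/-- Closed form for the integrals occurring in `F₁` and `F₂`. -/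
lemma gen_closed (α D A m T : ℝ) (hα : α ≠ 0) (hD : 0 < D) :
    α * ∫ s in (0:ℝ)..T, (D - A * exp (-m*(T-s))) * exp (-(α*D)*s)
      = 1 - exp (-(α*D*T)) - α * A * (exp (-(α*D*T)) * Eint (α*D - m) T) := by
  have key : ∀ s : ℝ, (D - A * exp (-m*(T-s))) * exp (-(α*D)*s)
      = D * exp (-(α*D)*s) - (A * exp (-(m*T))) * exp ((m - α*D)*s) := by
    intro s
    rw [sub_mul, mul_assoc, ← exp_add, mul_assoc, ← exp_add]
    ring_nf
  rw [intervalIntegral.integral_congr (fun s _ => key s),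
    intervalIntegral.integral_sub
      (Continuous.intervalIntegrable (by fun_prop) _ _)
      (Continuous.intervalIntegrable (by fun_prop) _ _),
    intervalIntegral.integral_const_mul, intervalIntegral.integral_const_mul,
    integral_exp_mul', integral_exp_mul']
  have e1 : Eint (-(α*D)) T = (1 - exp (-(α*D*T)))/(α*D) := by
    have hαD : α * D ≠ 0 := mul_ne_zero hα hD.ne'
    unfold Eint
    rw [if_neg (neg_ne_zero.mpr hαD), neg_mul, div_neg, ← neg_div, neg_sub]
  have e2 : exp (-(m*T)) * Eint (m - α*D) T
      = exp (-(α*D*T)) * Eint (α*D - m) T := by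
    have : exp (-(m*T)) = exp (-(α*D*T)) * exp (-((m - α*D)*T)) := by
      rw [← exp_add]; ring_nf
    rw [this, mul_assoc, Eint_symm, neg_sub]
  rw [e1, mul_assoc A, e2]
  have hαD : α * D ≠ 0 := mul_ne_zero hα hD.ne'
  field_simp

/-- The key comparison: given `1 < B`, `q < p` and `q < B*p`, eventually
`B * Eint q T < Eint p T`. -/
lemma Eint_compare (B p q : ℝ) (hB : 1 < B) (hqp : q < p) (hqBp : q < B*p) :
    ∃ t : ℝ, 0 < t ∧ ∀ T, t < T → B * Eint q T < Eint p T := by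
  have hB0 : 0 < B := lt_trans one_pos hB
  rcases lt_trichotomy p 0 with hp | hp | hp
  · -- p < 0, hence q < B*p < 0
    have hq : q < 0 := by nlinarith
    set m : ℝ := B*p/q with hm
    have hm0 : 0 < m := div_pos_of_neg_of_neg (by nlinarith) hq
    have hm1 : m < 1 := by
      rw [hm, div_lt_one_of_neg hq]
      exact hqBp
    refine ⟨log (1-m)/p, ?_, ?_⟩
    · apply div_pos_of_neg_of_neg _ hp
      exact log_neg (by linarith) (by linarith)
    · intro T hT
      have hexp : exp (p*T) < 1 - m := by
        have : p*T < log (1-m) := by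
          have := (div_lt_iff_of_neg hp).mp hT
          linarith [this]
        calc exp (p*T) < exp (log (1-m)) := exp_lt_exp.mpr this
          _ = 1 - m := exp_log (by linarith)
      have h1 : B * Eint q T < B * (-(1/q)) := by
        exact (mul_lt_mul_iff_right₀ hB0).mpr (Eint_lt_of_neg hq T)
      have h2 : B * (-(1/q)) < Eint p T := by
        unfold Eint
        rw [if_neg hp.ne, lt_div_iff_of_neg hp]
        have hq' : q ≠ 0 := hq.ne
        have key : B * (-(1/q)) * p = -m := by rw [hm]; field_simp
        rw [key]
        linarith
      linarith
  · -- p = 0, hence q < 0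
    subst hp
    have hq : q < 0 := by nlinarith
    refine ⟨B * (-(1/q)), mul_pos hB0 (neg_pos.mpr (one_div_neg.mpr hq)), ?_⟩
    intro T hT
    have h1 : B * Eint q T < B * (-(1/q)) := (mul_lt_mul_iff_right₀ hB0).mpr (Eint_lt_of_neg hq T)
    have : Eint 0 T = T := by simp [Eint]
    rw [this]
    linarith
  · -- p > 0
    set r : ℝ := (max q 0 + p)/2 with hrdef
    have hmax : max q 0 < p := max_lt hqp hp
    have hr0 : 0 < r := by
      have : (0:ℝ) ≤ max q 0 := le_max_right q 0
      rw [hrdef]; linarith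
    have hrp : r < p := by rw [hrdef]; linarith
    have hqr : q < r := by
      have : q ≤ max q 0 := le_max_left q 0
      rw [hrdef]; linarith
    set C : ℝ := p*(B+r)/r with hC
    have hC0 : 0 < C := by positivity
    refine ⟨max (max (log C/(p-r)) (-log p / r)) 1, by positivity, ?_⟩
    intro T hT
    have hT1 : (1:ℝ) < T := lt_of_le_of_lt (le_max_right _ _) hT
    have hT0 : 0 < T := by linarith
    have hmono : Eint q T ≤ Eint r T := Eint_mono hqr.le hT0.le
    have h2 : C < exp ((p-r)*T) := by
      have ht1 : log C/(p-r) < T := lt_of_le_of_lt (le_trans (le_max_left _ _) (le_max_left _ _)) hT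
      have : log C < (p-r)*T := by
        rw [div_lt_iff₀ (by linarith : (0:ℝ) < p - r)] at ht1
        linarith
      calc C = exp (log C) := (exp_log hC0).symm
        _ < exp ((p-r)*T) := exp_lt_exp.mpr this
    have h3 : 1 < exp (r*T) * p := by
      have ht2 : -log p / r < T := lt_of_le_of_lt (le_trans (le_max_right _ _) (le_max_left _ _)) hT
      have : -log p < r*T := by
        rw [div_lt_iff₀ hr0] at ht2
        linarith
      have : exp (-log p) < exp (r*T) := exp_lt_exp.mpr this
      rw [exp_neg, exp_log hp] at this
      rw [← div_lt_iff₀ hp, one_div] at *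
      exact this
    have hx : (0:ℝ) < exp (r*T) := exp_pos _
    have hy : (0:ℝ) < exp ((p-r)*T) := exp_pos _
    have hCr : C * r = p*(B+r) := div_mul_cancel₀ _ hr0.ne'
    have hfinal : B * Eint r T < Eint p T := by
      unfold Eint
      rw [if_neg hr0.ne', if_neg hp.ne', mul_div_assoc', div_lt_div_iff₀ hr0 hp]
      have hsplit : exp (p*T) = exp (r*T) * exp ((p-r)*T) := by
        rw [← exp_add]; ring_nf
      rw [hsplit]
      have hprod : C * (exp (r*T) * r) < exp ((p-r)*T) * (exp (r*T) * r) :=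
        (mul_lt_mul_iff_left₀ (by positivity)).mpr h2
      nlinarith [hprod, hCr, h3, hx, hr0, hB0]
    calc B * Eint q T ≤ B * Eint r T := (mul_le_mul_iff_right₀ hB0).mpr hmono
      _ < Eint p T := hfinal

lemma F₁_closed (α ω β T : ℝ) (hα : α ≠ 0) :
    F₁ α ω β T = 1 - exp (-(α*(exp β+1)*T))
      - α * 1 * (exp (-(α*(exp β+1)*T)) * Eint (α*(exp β+1) - exp β*(α+ω)) T) := by
  rw [← gen_closed α (exp β + 1) 1 (exp β*(α+ω)) T hα (by positivity)]
  unfold F₁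
  congr 1
  apply intervalIntegral.integral_congr
  intro s _
  simp only [one_mul]

lemma F₂_closed (α ω β γ T : ℝ) (hα : α ≠ 0) :
    F₂ α ω β γ T = 1 - exp (-(α*(exp β+1)*T))
      - α * exp β * (exp (-(α*(exp β+1)*T)) * Eint (α*(exp β+1) - (α + ω*exp γ)) T) := by
  rw [← gen_closed α (exp β + 1) (exp β) (α + ω*exp γ) T hα (by positivity)]
  rfl

theorem direction_bias_pos (α ω β γ : ℝ) (hα : 0 < α) (hω : 0 < ω) (hβ : 0 < β)
    (hγ : exp γ > max (exp (2 * β)) (exp β + (α / ω) * (exp β - 1))) :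
    ∃ tstar : ℝ, 0 < tstar ∧ ∀ T : ℝ, tstar < T → F₁ α ω β T < F₂ α ω β γ T := by
  have hγ1 : exp (2*β) < exp γ := lt_of_le_of_lt (le_max_left _ _) hγ
  have hγ2 : exp β + (α/ω)*(exp β - 1) < exp γ := lt_of_le_of_lt (le_max_right _ _) hγ
  have hB : 1 < exp β := one_lt_exp_iff.mpr hβ
  have hre : α/ω*ω = α := div_mul_cancel₀ _ hω.ne'
  have h2β : exp (2*β) = exp β * exp β := by rw [two_mul, exp_add]
  set p : ℝ := α*(exp β+1) - exp β*(α+ω) with hp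
  set q : ℝ := α*(exp β+1) - (α + ω*exp γ) with hq
  have hqp : q < p := by
    have := mul_lt_mul_of_pos_right hγ2 hω
    rw [hq, hp]
    nlinarith [this, hre]
  have hqBp : q < exp β * p := by
    have := mul_lt_mul_of_pos_left hγ1 hω
    rw [hq, hp]
    nlinarith [this, h2β]
  obtain ⟨t, ht0, hcomp⟩ := Eint_compare (exp β) p q hB hqp hqBp
  refine ⟨t, ht0, fun T hT => ?_⟩
  rw [F₁_closed α ω β T hα.ne', F₂_closed α ω β γ T hα.ne']
  have hc := hcomp T hT
  have he : (0:ℝ) < exp (-(α*(exp β+1)*T)) := exp_pos _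
  nlinarith [mul_pos (mul_pos hα he) (sub_pos.mpr hc)]
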